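/- Define the meet f ∩ g by (f ∩ g)(⟨d,e,n⟩) = the common value of Φ_d[f](n) and Φ_e[g](n) when both converge and are equal, undefined otherwise. Then f ∩ g is a greatest lower bound of f and g with respect to ≤subT: f ∩ g ≤subT f, f ∩ g ≤subT g, and for any h with h ≤subT f and h ≤subT g we have h ≤subT f ∩ g. Hence the subTuring degrees form a lattice. -/
import Mathlib


open Classical

noncomputable section

/-- `as` is a valid answer history for the sequential oracle computation of `Φ`
with oracle `g` on input `n`: at each round `k`, the machine outputs a query
`(false, q)` with `q` in the domain of `g`, answered by `g q = as[k]`. -/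
def ValidHist (Φ : List ℕ →. Bool × ℕ) (g : ℕ →. ℕ) (n : ℕ) (as : List ℕ) : Prop :=
  ∀ (k : ℕ) (hk : k < as.length), ∃ q : ℕ,
    (false, q) ∈ Φ (n :: as.take k) ∧ (as[k]'hk) ∈ g q

/-- The sequential oracle computation `Φ[g](n)` halts with output `m`. -/
def HaltsTo (Φ : List ℕ →. Bool × ℕ) (g : ℕ →. ℕ) (n m : ℕ) : Prop :=
  ∃ as : List ℕ, ValidHist Φ g n as ∧ (true, m) ∈ Φ (n :: as)

/-- subTuring reducibility: `f ⊆ Φ[g]` for some partial computable `Φ`. -/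
def SubTuringLE (f g : ℕ →. ℕ) : Prop :=
  ∃ Φ : List ℕ →. Bool × ℕ, Partrec Φ ∧ ∀ n m, m ∈ f n → HaltsTo Φ g n m

/-- subTuring equivalence. -/
def SubTuringEquiv (f g : ℕ →. ℕ) : Prop := SubTuringLE f g ∧ SubTuringLE g f

/-- The `e`-th partial computable function `List ℕ →. Bool × ℕ`,
obtained from the `e`-th partial recursive code. -/
def phi (e : ℕ) : List ℕ →. Bool × ℕ := fun l =>
  ((Denumerable.ofNat Nat.Partrec.Code e).eval (Encodable.encode l)).bind fun k =>
    Part.ofOption (Encodable.decode (α := Bool × ℕ) k)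

/-- The meet `f ∩ g`: on input `⟨d, e, n⟩` it takes the common value of
`Φ_d[f](n)` and `Φ_e[g](n)` when both converge and agree; undefined otherwise. -/
def PMeet (f g : ℕ →. ℕ) : ℕ →. ℕ := fun p =>
  ⟨∃ m, HaltsTo (phi p.unpair.1) f p.unpair.2.unpair.2 m ∧
        HaltsTo (phi p.unpair.2.unpair.1) g p.unpair.2.unpair.2 m,
   fun h => Classical.choose h⟩

lemma phi_partrec : Partrec₂ fun e l => phi e l := by
  have h1 : Partrec₂ fun (e : ℕ) (l : List ℕ) =>
      (Denumerable.ofNat Nat.Partrec.Code e).eval (Encodable.encode l) :=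
    Nat.Partrec.Code.eval_part.comp ((Computable.ofNat _).comp Computable.fst)
      (Computable.encode.comp Computable.snd)
  exact h1.bind (Computable.ofOption
    ((Computable.decode (α := Bool × ℕ)).comp Computable.snd)).to₂

lemma exists_index (Φ : List ℕ →. Bool × ℕ) (h : Partrec Φ) : ∃ d, phi d = Φ := by
  rw [Partrec] at h
  obtain ⟨c, hc⟩ := Nat.Partrec.Code.exists_code.1 h
  refine ⟨Encodable.encode c, funext fun l => ?_⟩
  simp only [phi, Denumerable.ofNat_encode, hc]
  ext m
  simp [Encodable.encodek, Part.bind_assoc]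
  constructor
  · rintro (⟨b, hb, rfl⟩ | ⟨b, hb, rfl⟩) <;> exact hb
  · intro hm
    rcases m with ⟨b, k⟩
    cases b
    · exact Or.inl ⟨k, hm, rfl⟩
    · exact Or.inr ⟨k, hm, rfl⟩

-- determinism
lemma agree {Φ : List ℕ →. Bool × ℕ} {g : ℕ →. ℕ} {n : ℕ} {as₁ as₂ : List ℕ}
    (v₁ : ValidHist Φ g n as₁) (v₂ : ValidHist Φ g n as₂) :
    ∀ k (h1 : k < as₁.length) (h2 : k < as₂.length), as₁[k] = as₂[k] := by
  intro k
  induction k using Nat.strong_induction_on with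
  | _ k ih =>
    intro h1 h2
    have htake : as₁.take k = as₂.take k := by
      apply List.ext_getElem
      · simp only [List.length_take]; omega
      · intro i hi1 hi2
        simp only [List.length_take] at hi1 hi2
        simp only [List.getElem_take]
        exact ih i (by omega) (by omega) (by omega)
    obtain ⟨q₁, hq₁, ha₁⟩ := v₁ k h1
    obtain ⟨q₂, hq₂, ha₂⟩ := v₂ k h2
    rw [htake] at hq₁
    have : q₁ = q₂ := by
      have := Part.mem_unique hq₁ hq₂
      simpa using this
    subst this
    exact Part.mem_unique ha₁ ha₂

lemma halts_unique {Φ : List ℕ →. Bool × ℕ} {g : ℕ →. ℕ} {n m₁ m₂ : ℕ}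
    (H1 : HaltsTo Φ g n m₁) (H2 : HaltsTo Φ g n m₂) : m₁ = m₂ := by
  obtain ⟨as₁, v₁, h₁⟩ := H1
  obtain ⟨as₂, v₂, h₂⟩ := H2
  have key : ∀ (bs₁ bs₂ : List ℕ) (m : ℕ), ValidHist Φ g n bs₁ → ValidHist Φ g n bs₂ →
      (true, m) ∈ Φ (n :: bs₁) → ¬ bs₁.length < bs₂.length := by
    intro bs₁ bs₂ m w₁ w₂ hm hlt
    obtain ⟨q, hq, -⟩ := w₂ bs₁.length hlt
    have htake : bs₂.take bs₁.length = bs₁ := by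
      apply List.ext_getElem
      · simp only [List.length_take]; omega
      · intro i hi1 hi2
        simp only [List.length_take] at hi1
        simp only [List.getElem_take]
        exact (agree w₁ w₂ i (by omega) (by omega)).symm
    rw [htake] at hq
    exact absurd (Part.mem_unique hm hq) (by simp)
  have hlen : as₁.length = as₂.length := by
    rcases lt_trichotomy as₁.length as₂.length with h | h | h
    · exact absurd h (key as₁ as₂ m₁ v₁ v₂ h₁)
    · exact h
    · exact absurd h (key as₂ as₁ m₂ v₂ v₁ h₂)
  have : as₁ = as₂ := by
    apply List.ext_getElem hlen
    intro i hi1 hi2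
    exact agree v₁ v₂ i hi1 hi2
  subst this
  simpa using Part.mem_unique h₁ h₂


lemma headI_comp : Computable fun l : List ℕ => l.headI.unpair.1 :=
  (Primrec.fst.comp (Primrec.unpair.comp Primrec.list_headI)).to_comp

lemma arg_comp : Computable fun l : List ℕ => l.headI.unpair.2.unpair.2 :: l.tail :=
  (Primrec.list_cons.comp
    (Primrec.snd.comp (Primrec.unpair.comp
      (Primrec.snd.comp (Primrec.unpair.comp Primrec.list_headI))))
    Primrec.list_tail).to_comp

lemma M1_partrec : Partrec fun l : List ℕ =>
    phi l.headI.unpair.1 (l.headI.unpair.2.unpair.2 :: l.tail) :=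
  phi_partrec.comp headI_comp arg_comp

lemma M2_partrec : Partrec fun l : List ℕ =>
    phi l.headI.unpair.2.unpair.1 (l.headI.unpair.2.unpair.2 :: l.tail) :=
  phi_partrec.comp
    ((Primrec.fst.comp (Primrec.unpair.comp
      (Primrec.snd.comp (Primrec.unpair.comp Primrec.list_headI)))).to_comp)
    arg_comp

theorem meet_is_glb (f g : ℕ →. ℕ) :
    SubTuringLE (PMeet f g) f ∧ SubTuringLE (PMeet f g) g ∧
    ∀ h : ℕ →. ℕ, SubTuringLE h f → SubTuringLE h g → SubTuringLE h (PMeet f g) := by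
  refine ⟨?_, ?_, ?_⟩
  · refine ⟨fun l => phi l.headI.unpair.1 (l.headI.unpair.2.unpair.2 :: l.tail),
      M1_partrec, fun p m hm => ?_⟩
    obtain ⟨hp, rfl⟩ := Part.mem_mk_iff.1 hm
    obtain ⟨as, v, hh⟩ := (Classical.choose_spec hp).1
    exact ⟨as, fun k hk => v k hk, hh⟩
  · refine ⟨fun l => phi l.headI.unpair.2.unpair.1 (l.headI.unpair.2.unpair.2 :: l.tail),
      M2_partrec, fun p m hm => ?_⟩
    obtain ⟨hp, rfl⟩ := Part.mem_mk_iff.1 hm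
    obtain ⟨as, v, hh⟩ := (Classical.choose_spec hp).2
    exact ⟨as, fun k hk => v k hk, hh⟩
  · rintro h ⟨Φ₁, p1, c1⟩ ⟨Φ₂, p2, c2⟩
    obtain ⟨d, hd⟩ := exists_index Φ₁ p1
    obtain ⟨e, he⟩ := exists_index Φ₂ p2
    classical
    refine ⟨fun l => Part.some (match l.tail with
      | [] => (false, Nat.pair d (Nat.pair e l.headI))
      | a :: _ => (true, a)), ?_, ?_⟩
    · apply Computable.partrec
      have : Computable fun l : List ℕ =>
          (List.casesOn (motive := fun _ => Bool × ℕ) l.tail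
            (false, Nat.pair d (Nat.pair e l.headI)) (fun a _ => (true, a))) := by
        apply Primrec.to_comp
        exact Primrec.list_casesOn Primrec.list_tail
          ((Primrec.const false).pair
            (Primrec₂.natPair.comp (Primrec.const d)
              (Primrec₂.natPair.comp (Primrec.const e) Primrec.list_headI)))
          (((Primrec.const true).pair (Primrec.fst.comp Primrec.snd)).to₂)
      exact this.of_eq fun l => by cases l.tail <;> rfl
    · intro n m hm
      have H1 : HaltsTo (phi d) f n m := hd ▸ c1 n m hm
      have H2 : HaltsTo (phi e) g n m := he ▸ c2 n m hm
      have hmem : m ∈ PMeet f g (Nat.pair d (Nat.pair e n)) := by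
        rw [PMeet, Part.mem_mk_iff]
        simp only [Nat.unpair_pair]
        have hex : ∃ m', HaltsTo (phi d) f n m' ∧ HaltsTo (phi e) g n m' := ⟨m, H1, H2⟩
        exact ⟨hex, halts_unique (Classical.choose_spec hex).1 H1⟩
      refine ⟨[m], fun k hk => ?_, ?_⟩
      · have hk0 : k = 0 := by simpa using hk
        subst hk0
        exact ⟨Nat.pair d (Nat.pair e n), Part.mem_some _, hmem⟩
      · exact Part.mem_some _
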